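/- If the Lie subalgebra g of sp_N(R) contains all matrices Z_{ij} = [[0, E_{ij}+E_{ji}],[E_{ij}+E_{ji}, 0]] and Y_{ij} = [[0, E_{ij}+E_{ji}],[-(E_{ij}+E_{ji}), 0]] for all i, j with |i-j| ≤ 1, then g = sp_N(R). -/

import Mathlib

open Matrix

attribute [local instance 100] LieRing.ofAssociativeRing

noncomputable section

/-- The Lie algebra `sp_N(ℝ)` of matrices `[[A,B],[C,-Aᵀ]]` with `B`, `C` symmetric,
as a set of `2N×2N` real matrices. -/
def spSet (N : ℕ) : Set (Matrix (Fin N ⊕ Fin N) (Fin N ⊕ Fin N) ℝ) :=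
  {X | ∃ A B C : Matrix (Fin N) (Fin N) ℝ, Bᵀ = B ∧ Cᵀ = C ∧
    X = Matrix.fromBlocks A B C (-Aᵀ)}

/-- `Z_{ij} = [[0, E_{ij}+E_{ji}],[E_{ij}+E_{ji}, 0]]`. -/
def Zmat (N : ℕ) (i j : Fin N) : Matrix (Fin N ⊕ Fin N) (Fin N ⊕ Fin N) ℝ :=
  Matrix.fromBlocks 0 (Matrix.single i j 1 + Matrix.single j i 1)
    (Matrix.single i j 1 + Matrix.single j i 1) 0

/-- `Y_{ij} = [[0, E_{ij}+E_{ji}],[-(E_{ij}+E_{ji}), 0]]`. -/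
def Ymat (N : ℕ) (i j : Fin N) : Matrix (Fin N ⊕ Fin N) (Fin N ⊕ Fin N) ℝ :=
  Matrix.fromBlocks 0 (Matrix.single i j 1 + Matrix.single j i 1)
    (-(Matrix.single i j 1 + Matrix.single j i 1)) 0

namespace Stmt16Aux

variable {N : ℕ}

/-- `[[A,0],[0,-Aᵀ]]` as a linear map. -/
def Hlin (N : ℕ) : Matrix (Fin N) (Fin N) ℝ →ₗ[ℝ] Matrix (Fin N ⊕ Fin N) (Fin N ⊕ Fin N) ℝ where
  toFun A := Matrix.fromBlocks A 0 0 (-Aᵀ)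
  map_add' A A' := by simp [Matrix.fromBlocks_add, transpose_add, neg_add, add_comm]
  map_smul' c A := by simp [Matrix.fromBlocks_smul, transpose_smul]

lemma Hlin_apply (A : Matrix (Fin N) (Fin N) ℝ) : Hlin N A = Matrix.fromBlocks A 0 0 (-Aᵀ) := rfl

def Ulin (N : ℕ) : Matrix (Fin N) (Fin N) ℝ →ₗ[ℝ] Matrix (Fin N ⊕ Fin N) (Fin N ⊕ Fin N) ℝ where
  toFun B := Matrix.fromBlocks 0 B 0 0
  map_add' A A' := by simp [Matrix.fromBlocks_add]
  map_smul' c A := by simp [Matrix.fromBlocks_smul]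

def Llin (N : ℕ) : Matrix (Fin N) (Fin N) ℝ →ₗ[ℝ] Matrix (Fin N ⊕ Fin N) (Fin N ⊕ Fin N) ℝ where
  toFun C := Matrix.fromBlocks 0 0 C 0
  map_add' A A' := by simp [Matrix.fromBlocks_add]
  map_smul' c A := by simp [Matrix.fromBlocks_smul]

lemma lie_H_H (A A' : Matrix (Fin N) (Fin N) ℝ) :
    ⁅Hlin N A, Hlin N A'⁆ = Hlin N ⁅A, A'⁆ := by
  simp only [Hlin_apply, LinearMap.coe_mk, AddHom.coe_mk, Ring.lie_def, Matrix.fromBlocks_multiply]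
  simp [Matrix.fromBlocks_add, Matrix.fromBlocks_neg, transpose_sub, transpose_mul,
    sub_eq_add_neg, neg_mul, mul_neg]

lemma lie_H_U (A S : Matrix (Fin N) (Fin N) ℝ) :
    ⁅Hlin N A, Ulin N S⁆ = Ulin N (A * S + S * Aᵀ) := by
  simp only [Hlin_apply, Ulin, LinearMap.coe_mk, AddHom.coe_mk, Ring.lie_def, Matrix.fromBlocks_multiply]
  simp only [Matrix.mul_zero, Matrix.zero_mul, add_zero, zero_add, Matrix.mul_neg,
    sub_eq_add_neg, neg_neg, neg_zero, Matrix.fromBlocks_neg]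
  rw [Matrix.fromBlocks_add]
  simp

lemma lie_H_L (A C : Matrix (Fin N) (Fin N) ℝ) :
    ⁅Hlin N A, Llin N C⁆ = Llin N (-(Aᵀ * C + C * A)) := by
  simp only [Hlin_apply, Llin, LinearMap.coe_mk, AddHom.coe_mk, Ring.lie_def, Matrix.fromBlocks_multiply]
  simp only [Matrix.mul_zero, Matrix.zero_mul, add_zero, zero_add, Matrix.neg_mul,
    sub_eq_add_neg, neg_zero, neg_add, Matrix.fromBlocks_neg]
  rw [Matrix.fromBlocks_add]
  simp [add_comm]

lemma lie_U_L (B C : Matrix (Fin N) (Fin N) ℝ) (hB : Bᵀ = B) (hC : Cᵀ = C) :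
    ⁅Ulin N B, Llin N C⁆ = Hlin N (B * C) := by
  simp only [Hlin_apply, Ulin, Llin, LinearMap.coe_mk, AddHom.coe_mk, Ring.lie_def,
    Matrix.fromBlocks_multiply]
  simp only [Matrix.mul_zero, Matrix.zero_mul, add_zero, zero_add, transpose_mul, hB, hC,
    sub_eq_add_neg, neg_zero, Matrix.fromBlocks_neg]
  rw [Matrix.fromBlocks_add]
  simp

lemma stdBasis_transpose (i j : Fin N) :
    (Matrix.single i j (1:ℝ))ᵀ = Matrix.single j i 1 := by
  ext a b
  simp [Matrix.single, Matrix.transpose_apply, and_comm]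

lemma stdBasis_symm_transpose (i j : Fin N) :
    (Matrix.single i j (1:ℝ) + Matrix.single j i 1)ᵀ
      = Matrix.single i j (1:ℝ) + Matrix.single j i 1 := by
  rw [transpose_add, stdBasis_transpose, stdBasis_transpose, add_comm]

lemma lie_stdBasis (a b c : Fin N) (hac : a ≠ c) :
    ⁅Matrix.single a b (1:ℝ), Matrix.single b c (1:ℝ)⁆
      = Matrix.single a c (1:ℝ) := by
  rw [Ring.lie_def, Matrix.single_mul_single_same,
    Matrix.single_mul_single_of_ne (h := Ne.symm hac)]
  simp

end Stmt16Aux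

open Stmt16Aux

/-- if a Lie subalgebra `g ⊆ sp_N(ℝ)` contains all the `Z_{ij}` and `Y_{ij}`
with `|i-j| ≤ 1`, then `g = sp_N(ℝ)`. -/
theorem stmt16 (N : ℕ) (hN : 1 ≤ N)
    (g : LieSubalgebra ℝ (Matrix (Fin N ⊕ Fin N) (Fin N ⊕ Fin N) ℝ))
    (hsub : (g : Set (Matrix (Fin N ⊕ Fin N) (Fin N ⊕ Fin N) ℝ)) ⊆ spSet N)
    (hZY : ∀ i j : Fin N, (i : ℕ) ≤ (j : ℕ) + 1 → (j : ℕ) ≤ (i : ℕ) + 1 →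
      Zmat N i j ∈ g ∧ Ymat N i j ∈ g) :
    (g : Set (Matrix (Fin N ⊕ Fin N) (Fin N ⊕ Fin N) ℝ)) = spSet N := by
  apply Set.Subset.antisymm hsub
  -- Step 1: U and L for adjacent pairs
  have hUadj : ∀ i j : Fin N, (i : ℕ) ≤ (j : ℕ) + 1 → (j : ℕ) ≤ (i : ℕ) + 1 →
      Ulin N (Matrix.single i j 1 + Matrix.single j i 1) ∈ g := by
    intro i j h1 h2
    obtain ⟨hZ, hY⟩ := hZY i j h1 h2
    have e2 : Zmat N i j + Ymat N i j
        = (2 : ℝ) • Ulin N (Matrix.single i j 1 + Matrix.single j i 1) := by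
      ext a b
      rcases a with a | a <;> rcases b with b | b <;> simp [Zmat, Ymat, Ulin] <;> ring
    have h3 := g.smul_mem ((1:ℝ)/2) (g.add_mem hZ hY)
    rw [e2, smul_smul, show (1:ℝ)/2 * 2 = 1 by norm_num, one_smul] at h3
    exact h3
  have hLadj : ∀ i j : Fin N, (i : ℕ) ≤ (j : ℕ) + 1 → (j : ℕ) ≤ (i : ℕ) + 1 →
      Llin N (Matrix.single i j 1 + Matrix.single j i 1) ∈ g := by
    intro i j h1 h2
    obtain ⟨hZ, hY⟩ := hZY i j h1 h2
    have e2 : Zmat N i j - Ymat N i j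
        = (2 : ℝ) • Llin N (Matrix.single i j 1 + Matrix.single j i 1) := by
      ext a b
      rcases a with a | a <;> rcases b with b | b <;> simp [Zmat, Ymat, Llin] <;> ring
    have h3 := g.smul_mem ((1:ℝ)/2) (sub_mem hZ hY)
    rw [e2, smul_smul, show (1:ℝ)/2 * 2 = 1 by norm_num, one_smul] at h3
    exact h3
  -- Step 2: H for adjacent pairs
  have hH1 : ∀ i j : Fin N, (i : ℕ) ≤ (j : ℕ) + 1 → (j : ℕ) ≤ (i : ℕ) + 1 →
      Hlin N (Matrix.single i j 1) ∈ g := by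
    intro i j h1 h2
    have hmem : Hlin N ((Matrix.single i i 1 + Matrix.single i i 1) *
        (Matrix.single i j 1 + Matrix.single j i 1)) ∈ g := by
      rw [← lie_U_L _ _ (stdBasis_symm_transpose i i) (stdBasis_symm_transpose i j)]
      exact g.lie_mem (hUadj i i (Nat.le_succ _) (Nat.le_succ _)) (hLadj i j h1 h2)
    by_cases hij : i = j
    · subst hij
      have e : (Matrix.single i i (1:ℝ) + Matrix.single i i 1) *
          (Matrix.single i i 1 + Matrix.single i i 1)
            = (4 : ℝ) • Matrix.single i i 1 := by
        simp only [add_mul, mul_add, Matrix.single_mul_single_same, one_mul]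
        module
      rw [e] at hmem
      have h4 := g.smul_mem ((1:ℝ)/4) hmem
      rw [_root_.map_smul, smul_smul, show (1:ℝ)/4 * 4 = 1 by norm_num, one_smul] at h4
      exact h4
    · have h0 : Matrix.single i i (1:ℝ) * Matrix.single j i (1:ℝ) = 0 :=
        Matrix.single_mul_single_of_ne (h := hij) ..
      have e : (Matrix.single i i (1:ℝ) + Matrix.single i i 1) *
          (Matrix.single i j 1 + Matrix.single j i 1)
            = (2 : ℝ) • Matrix.single i j 1 := by
        simp only [add_mul, mul_add, Matrix.single_mul_single_same, one_mul, h0, add_zero]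
        module
      rw [e] at hmem
      have h4 := g.smul_mem ((1:ℝ)/2) hmem
      rw [_root_.map_smul, smul_smul, show (1:ℝ)/2 * 2 = 1 by norm_num, one_smul] at h4
      exact h4
  -- Step 3: H for all pairs, by induction on distance
  have hHij : ∀ i j : Fin N, Hlin N (Matrix.single i j 1) ∈ g := by
    have key : ∀ k : ℕ, ∀ i j : Fin N, Nat.dist i.val j.val ≤ k →
        Hlin N (Matrix.single i j 1) ∈ g := by
      intro k
      induction k with
      | zero =>
        intro i j h
        simp only [Nat.dist] at h
        exact hH1 i j (by omega) (by omega)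
      | succ k ih =>
        intro i j h
        by_cases hadj : (i : ℕ) ≤ (j : ℕ) + 1 ∧ (j : ℕ) ≤ (i : ℕ) + 1
        · exact hH1 i j hadj.1 hadj.2
        · simp only [Nat.dist] at h
          rcases lt_or_gt_of_ne (show i.val ≠ j.val by omega) with hlt | hgt
          · have hm : i.val + 1 < N := by omega
            set m : Fin N := ⟨i.val + 1, hm⟩ with hmdef
            have hij' : i ≠ j := fun hEq => by simp [hEq] at hlt
            have h1 : Hlin N (Matrix.single i m 1) ∈ g :=
              hH1 i m (by simp only [hmdef]; omega) (by simp only [hmdef]; omega)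
            have h2 : Hlin N (Matrix.single m j 1) ∈ g :=
              ih m j (by simp only [Nat.dist, hmdef]; omega)
            have := g.lie_mem h1 h2
            rwa [lie_H_H, lie_stdBasis i m j (by exact fun hEq => hij' hEq)] at this
          · have hm : i.val - 1 < N := by omega
            set m : Fin N := ⟨i.val - 1, hm⟩ with hmdef
            have hij' : i ≠ j := fun hEq => by simp [hEq] at hgt
            have h1 : Hlin N (Matrix.single i m 1) ∈ g :=
              hH1 i m (by simp only [hmdef]; omega) (by simp only [hmdef]; omega)
            have h2 : Hlin N (Matrix.single m j 1) ∈ g :=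
              ih m j (by simp only [Nat.dist, hmdef]; omega)
            have := g.lie_mem h1 h2
            rwa [lie_H_H, lie_stdBasis i m j (by exact fun hEq => hij' hEq)] at this
    intro i j
    exact key (Nat.dist i.val j.val) i j le_rfl
  -- Step 4: H for all matrices
  have hHA : ∀ A : Matrix (Fin N) (Fin N) ℝ, Hlin N A ∈ g := by
    intro A
    rw [Matrix.matrix_eq_sum_single A, map_sum]
    rw [← LieSubalgebra.mem_toSubmodule]
    refine Submodule.sum_mem _ (fun i _ => ?_)
    rw [map_sum]
    refine Submodule.sum_mem _ (fun j _ => ?_)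
    have e : Matrix.single i j (A i j) = (A i j) • Matrix.single i j 1 := by
      simp
    rw [e, _root_.map_smul]
    exact Submodule.smul_mem _ _ (hHij i j)
  -- Step 5: U and L for all symmetric generators S_ij (all pairs)
  have hUS : ∀ i j : Fin N,
      Ulin N (Matrix.single i j 1 + Matrix.single j i 1) ∈ g := by
    intro i j
    have hmem := g.lie_mem (hHA (Matrix.single i j 1))
      (hUadj j j (Nat.le_succ _) (Nat.le_succ _))
    rw [lie_H_U] at hmem
    have e : Matrix.single i j (1:ℝ) *
          (Matrix.single j j 1 + Matrix.single j j 1) +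
        (Matrix.single j j 1 + Matrix.single j j 1) *
          (Matrix.single i j (1:ℝ))ᵀ
        = (2 : ℝ) • (Matrix.single i j 1 + Matrix.single j i 1) := by
      rw [stdBasis_transpose]
      simp only [add_mul, mul_add, Matrix.single_mul_single_same, one_mul]
      module
    rw [e] at hmem
    have h4 := g.smul_mem ((1:ℝ)/2) hmem
    rw [_root_.map_smul, smul_smul, show (1:ℝ)/2 * 2 = 1 by norm_num, one_smul] at h4
    exact h4
  have hLS : ∀ i j : Fin N,
      Llin N (Matrix.single i j 1 + Matrix.single j i 1) ∈ g := by
    intro i j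
    have hmem := g.lie_mem (hHA (Matrix.single j i 1))
      (hLadj j j (Nat.le_succ _) (Nat.le_succ _))
    rw [lie_H_L] at hmem
    have e : -((Matrix.single j i (1:ℝ))ᵀ *
          (Matrix.single j j 1 + Matrix.single j j 1) +
        (Matrix.single j j 1 + Matrix.single j j 1) *
          Matrix.single j i (1:ℝ))
        = (-2 : ℝ) • (Matrix.single i j 1 + Matrix.single j i 1) := by
      rw [stdBasis_transpose]
      simp only [add_mul, mul_add, Matrix.single_mul_single_same, one_mul]
      module
    rw [e] at hmem
    have h4 := g.smul_mem (-(1:ℝ)/2) hmem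
    rw [_root_.map_smul, smul_smul, show (-(1:ℝ)/2 * -2) = 1 by norm_num, one_smul] at h4
    exact h4
  -- Step 6: U and L for all symmetric matrices
  have symm_rep : ∀ B : Matrix (Fin N) (Fin N) ℝ, Bᵀ = B →
      B = (1/2 : ℝ) • ∑ i, ∑ j, B i j •
        (Matrix.single i j (1:ℝ) + Matrix.single j i 1) := by
    intro B hB
    ext a b
    have hba : B b a = B a b := by
      rw [show B a b = Bᵀ a b from by rw [hB], Matrix.transpose_apply]
    simp [Matrix.sum_apply, Matrix.single, mul_add, ite_and,
      Finset.sum_add_distrib, Finset.sum_ite_eq, Finset.sum_ite_eq', hba]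
    ring
  have hUB : ∀ B : Matrix (Fin N) (Fin N) ℝ, Bᵀ = B → Ulin N B ∈ g := by
    intro B hB
    rw [symm_rep B hB, LinearMap.map_smul, map_sum, ← LieSubalgebra.mem_toSubmodule]
    refine Submodule.smul_mem _ _ (Submodule.sum_mem _ (fun i _ => ?_))
    rw [map_sum]
    refine Submodule.sum_mem _ (fun j _ => ?_)
    rw [LinearMap.map_smul]
    exact Submodule.smul_mem _ _ (hUS i j)
  have hLB : ∀ C : Matrix (Fin N) (Fin N) ℝ, Cᵀ = C → Llin N C ∈ g := by
    intro C hC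
    rw [symm_rep C hC, LinearMap.map_smul, map_sum, ← LieSubalgebra.mem_toSubmodule]
    refine Submodule.smul_mem _ _ (Submodule.sum_mem _ (fun i _ => ?_))
    rw [map_sum]
    refine Submodule.sum_mem _ (fun j _ => ?_)
    rw [LinearMap.map_smul]
    exact Submodule.smul_mem _ _ (hLS i j)
  -- Step 7: conclude
  rintro X ⟨A, B, C, hB, hC, rfl⟩
  have e : Matrix.fromBlocks A B C (-Aᵀ) = Hlin N A + Ulin N B + Llin N C := by
    simp only [Hlin_apply, Ulin, Llin, LinearMap.coe_mk, AddHom.coe_mk]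
    rw [Matrix.fromBlocks_add, Matrix.fromBlocks_add]
    simp
  rw [e]
  exact g.add_mem (g.add_mem (hHA A) (hUB B hB)) (hLB C hC)


end
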